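/- Let X₁ and X₂ be Banach spaces, let X = X₁ ⊕ X₂ with the norm ‖(x₁,x₂)‖ = ‖x₁‖ + ‖x₂‖, and for m ∈ {1,2} let J_m : X_m → X and Q_m : X → X_m be the canonical coordinate embedding and projection. Let I be a closed two-sided ideal of B(X) and for j,k ∈ {1,2} set I_{j,k} = {Q_j ∘ T ∘ J_k : T ∈ I}. Suppose: (i) there are constants C₁, C₂ ≥ 1 such that for j = 1, 2 and every T ∈ B(X_j) with dist(T, I_{j,j}) = 1 there exist R, S ∈ B(X_j) with dist(R, I_{j,j})·dist(S, I_{j,j}) ≤ C_j such that R∘T∘S ∉ I_{j,j} and (R∘T∘S)² − R∘T∘S ∈ I_{j,j}; and (ii) I_{1,2} = B(X₂, X₁) and I_{2,1} = B(X₁, X₂). Then for every T ∈ B(X) with dist(T, I) = 1 there exist U, V ∈ B(X) with dist(U, I)·dist(V, I) ≤ max(C₁, C₂) such that U∘T∘V ∉ I and (U∘T∘V)² − U∘T∘V ∈ I. (That is, the quotient algebra B(X)/I has the idempotent factorization property with constant max(C₁, C₂).) -/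

import Mathlib

open scoped ENNReal



-- general helper: compare infDists via a transfer map
theorem infDist_le_transfer {E F : Type*} [NormedAddCommGroup E] [NormedAddCommGroup F]
    (a : E) (s : Set E) (b : F) (t : Set F) (ht : t.Nonempty)
    (h : ∀ y ∈ t, ∃ z ∈ s, dist a z ≤ dist b y) :
    Metric.infDist a s ≤ Metric.infDist b t := by
  refine le_of_forall_pos_le_add fun ε hε => ?_
  obtain ⟨y, hy, hdy⟩ := (Metric.infDist_lt_iff ht).1
    (lt_add_of_pos_right _ hε : Metric.infDist b t < Metric.infDist b t + ε)
  obtain ⟨z, hz, hdz⟩ := h y hy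
  exact le_trans (Metric.infDist_le_dist_of_mem hz) (hdz.trans hdy.le)

theorem auxFactor {𝕜 : Type*} [RCLike 𝕜]
    {X' : Type*} [NormedAddCommGroup X'] [NormedSpace 𝕜 X']
    {X : Type*} [NormedAddCommGroup X] [NormedSpace 𝕜 X]
    (J : X' →L[𝕜] X) (Q : X →L[𝕜] X')
    (hQJ : ∀ x, Q (J x) = x) (hJn : ‖J‖ ≤ 1) (hQn : ‖Q‖ ≤ 1)
    (I : Submodule 𝕜 (X →L[𝕜] X))
    (hI_ideal : ∀ T ∈ I, ∀ R S : X →L[𝕜] X, S ∘L T ∘L R ∈ I)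
    (I' : Set (X' →L[𝕜] X')) (hI' : I' = {S | ∃ T ∈ I, S = Q ∘L T ∘L J})
    (C : ℝ)
    (h : ∀ T : X' →L[𝕜] X', Metric.infDist T I' = 1 →
      ∃ R S : X' →L[𝕜] X', Metric.infDist R I' * Metric.infDist S I' ≤ C ∧
        R ∘L T ∘L S ∉ I' ∧ (R ∘L T ∘L S) ∘L (R ∘L T ∘L S) - R ∘L T ∘L S ∈ I')
    (T : X →L[𝕜] X) (hT : Metric.infDist (Q ∘L T ∘L J) I' = 1) :
    ∃ U V : X →L[𝕜] X,
      Metric.infDist U (I : Set (X →L[𝕜] X)) * Metric.infDist V (I : Set (X →L[𝕜] X)) ≤ C ∧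
      U ∘L T ∘L V ∉ I ∧ (U ∘L T ∘L V) ∘L (U ∘L T ∘L V) - U ∘L T ∘L V ∈ I := by
  obtain ⟨R, S, hRS, hnot, hidem⟩ := h (Q ∘L T ∘L J) hT
  have hI'ne : I'.Nonempty := by
    refine ⟨0, ?_⟩
    rw [hI']
    exact ⟨0, I.zero_mem, by ext x; simp⟩
  -- transfer distance estimate
  have distle : ∀ A : X' →L[𝕜] X',
      Metric.infDist (J ∘L A ∘L Q) (I : Set (X →L[𝕜] X)) ≤ Metric.infDist A I' := by
    intro A
    refine infDist_le_transfer _ _ _ _ hI'ne fun B hB => ?_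
    rw [hI'] at hB
    obtain ⟨W, hW, rfl⟩ := hB
    refine ⟨(J ∘L Q) ∘L W ∘L (J ∘L Q), hI_ideal W hW _ _, ?_⟩
    have heq : (J ∘L A ∘L Q) - (J ∘L Q) ∘L W ∘L (J ∘L Q)
        = J ∘L (A - Q ∘L W ∘L J) ∘L Q := by ext x; simp
    rw [dist_eq_norm, dist_eq_norm, heq]
    calc ‖J ∘L (A - Q ∘L W ∘L J) ∘L Q‖ ≤ ‖J‖ * ‖(A - Q ∘L W ∘L J) ∘L Q‖ :=
          ContinuousLinearMap.opNorm_comp_le _ _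
      _ ≤ ‖J‖ * (‖A - Q ∘L W ∘L J‖ * ‖Q‖) := by
          gcongr; exact ContinuousLinearMap.opNorm_comp_le _ _
      _ ≤ 1 * (‖A - Q ∘L W ∘L J‖ * 1) := by
          gcongr
      _ = ‖A - Q ∘L W ∘L J‖ := by ring
  refine ⟨J ∘L R ∘L Q, J ∘L S ∘L Q, ?_, ?_, ?_⟩
  · exact le_trans (mul_le_mul (distle R) (distle S) Metric.infDist_nonneg
      Metric.infDist_nonneg) hRS
  · intro hmem
    apply hnot
    rw [hI']
    refine ⟨(J ∘L R ∘L Q) ∘L T ∘L (J ∘L S ∘L Q), hmem, ?_⟩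
    ext x; simp [hQJ]
  · have := hidem
    rw [hI'] at this
    obtain ⟨W, hW, hWeq⟩ := this
    have key : ((J ∘L R ∘L Q) ∘L T ∘L (J ∘L S ∘L Q)) ∘L ((J ∘L R ∘L Q) ∘L T ∘L (J ∘L S ∘L Q))
        - (J ∘L R ∘L Q) ∘L T ∘L (J ∘L S ∘L Q)
        = (J ∘L Q) ∘L W ∘L (J ∘L Q) := by
      have h2 : ((J ∘L R ∘L Q) ∘L T ∘L (J ∘L S ∘L Q)) ∘L ((J ∘L R ∘L Q) ∘L T ∘L (J ∘L S ∘L Q))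
          - (J ∘L R ∘L Q) ∘L T ∘L (J ∘L S ∘L Q)
          = J ∘L ((R ∘L (Q ∘L T ∘L J) ∘L S) ∘L (R ∘L (Q ∘L T ∘L J) ∘L S)
              - R ∘L (Q ∘L T ∘L J) ∘L S) ∘L Q := by
        ext x; simp [hQJ]
      rw [h2, hWeq]
      ext x; simp
    rw [key]
    exact hI_ideal W hW _ _


set_option maxHeartbeats 1000000

/-- Let `X = X₁ ⊕ X₂` with the sum norm, with coordinate embeddings
`J₁, J₂` and projections `Q₁, Q₂`, and let `I` be a closed two-sided ideal of `B(X)` with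
quadrants `I_{j,k}`. If the quotients by `I_{1,1}` and `I_{2,2}` have the idempotent
factorization property with constants `C₁` and `C₂` respectively, and the off-diagonal
quadrants are everything, then `B(X)/I` has the idempotent factorization property with
constant `max C₁ C₂`. -/
theorem statement15 {𝕜 : Type*} [RCLike 𝕜]
    {X₁ : Type*} [NormedAddCommGroup X₁] [NormedSpace 𝕜 X₁] [CompleteSpace X₁]
    {X₂ : Type*} [NormedAddCommGroup X₂] [NormedSpace 𝕜 X₂] [CompleteSpace X₂]
    (J₁ : X₁ →L[𝕜] WithLp 1 (X₁ × X₂)) (J₂ : X₂ →L[𝕜] WithLp 1 (X₁ × X₂))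
    (Q₁ : WithLp 1 (X₁ × X₂) →L[𝕜] X₁) (Q₂ : WithLp 1 (X₁ × X₂) →L[𝕜] X₂)
    (hJ₁ : ∀ x : X₁, J₁ x = (WithLp.equiv 1 (X₁ × X₂)).symm (x, 0))
    (hJ₂ : ∀ x : X₂, J₂ x = (WithLp.equiv 1 (X₁ × X₂)).symm (0, x))
    (hQ₁ : ∀ x : WithLp 1 (X₁ × X₂), Q₁ x = (WithLp.equiv 1 (X₁ × X₂) x).1)
    (hQ₂ : ∀ x : WithLp 1 (X₁ × X₂), Q₂ x = (WithLp.equiv 1 (X₁ × X₂) x).2)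
    (I : Submodule 𝕜 (WithLp 1 (X₁ × X₂) →L[𝕜] WithLp 1 (X₁ × X₂)))
    (hI_ideal : ∀ T ∈ I, ∀ R S : WithLp 1 (X₁ × X₂) →L[𝕜] WithLp 1 (X₁ × X₂),
      S ∘L T ∘L R ∈ I)
    (hI_closed : IsClosed (I : Set (WithLp 1 (X₁ × X₂) →L[𝕜] WithLp 1 (X₁ × X₂))))
    (I₁₁ : Set (X₁ →L[𝕜] X₁)) (hI₁₁ : I₁₁ = {S | ∃ T ∈ I, S = Q₁ ∘L T ∘L J₁})
    (I₂₂ : Set (X₂ →L[𝕜] X₂)) (hI₂₂ : I₂₂ = {S | ∃ T ∈ I, S = Q₂ ∘L T ∘L J₂})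
    (hI₁₂ : {S : X₂ →L[𝕜] X₁ | ∃ T ∈ I, S = Q₁ ∘L T ∘L J₂} = Set.univ)
    (hI₂₁ : {S : X₁ →L[𝕜] X₂ | ∃ T ∈ I, S = Q₂ ∘L T ∘L J₁} = Set.univ)
    (C₁ C₂ : ℝ) (hC₁ : 1 ≤ C₁) (hC₂ : 1 ≤ C₂)
    (h₁ : ∀ T : X₁ →L[𝕜] X₁, Metric.infDist T I₁₁ = 1 →
      ∃ R S : X₁ →L[𝕜] X₁, Metric.infDist R I₁₁ * Metric.infDist S I₁₁ ≤ C₁ ∧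
        R ∘L T ∘L S ∉ I₁₁ ∧
        (R ∘L T ∘L S) ∘L (R ∘L T ∘L S) - R ∘L T ∘L S ∈ I₁₁)
    (h₂ : ∀ T : X₂ →L[𝕜] X₂, Metric.infDist T I₂₂ = 1 →
      ∃ R S : X₂ →L[𝕜] X₂, Metric.infDist R I₂₂ * Metric.infDist S I₂₂ ≤ C₂ ∧
        R ∘L T ∘L S ∉ I₂₂ ∧
        (R ∘L T ∘L S) ∘L (R ∘L T ∘L S) - R ∘L T ∘L S ∈ I₂₂) :
    ∀ T : WithLp 1 (X₁ × X₂) →L[𝕜] WithLp 1 (X₁ × X₂),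
      Metric.infDist T (I : Set (WithLp 1 (X₁ × X₂) →L[𝕜] WithLp 1 (X₁ × X₂))) = 1 →
        ∃ U V : WithLp 1 (X₁ × X₂) →L[𝕜] WithLp 1 (X₁ × X₂),
          Metric.infDist U (I : Set (WithLp 1 (X₁ × X₂) →L[𝕜] WithLp 1 (X₁ × X₂))) *
              Metric.infDist V (I : Set (WithLp 1 (X₁ × X₂) →L[𝕜] WithLp 1 (X₁ × X₂))) ≤
            max C₁ C₂ ∧
          U ∘L T ∘L V ∉ I ∧
          (U ∘L T ∘L V) ∘L (U ∘L T ∘L V) - U ∘L T ∘L V ∈ I := by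
  intro T hT
  -- basic facts about the ℓ¹ sum norm and the coordinate maps
  have hnorm : ∀ x : WithLp 1 (X₁ × X₂), ‖x‖ = ‖x.fst‖ + ‖x.snd‖ := by
    intro x
    rw [WithLp.prod_norm_eq_add (by norm_num)]
    norm_num
  have hQJ₁ : ∀ x, Q₁ (J₁ x) = x := by intro x; rw [hJ₁, hQ₁]; simp
  have hQJ₂ : ∀ x, Q₂ (J₂ x) = x := by intro x; rw [hJ₂, hQ₂]; simp
  have hnJ₁ : ∀ x, ‖J₁ x‖ = ‖x‖ := by
    intro x; rw [hJ₁]; exact WithLp.norm_toLp_fst 1 X₁ X₂ x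
  have hnJ₂ : ∀ x, ‖J₂ x‖ = ‖x‖ := by
    intro x; rw [hJ₂]; exact WithLp.norm_toLp_snd 1 X₁ X₂ x
  have hnQ : ∀ x : WithLp 1 (X₁ × X₂), ‖Q₁ x‖ + ‖Q₂ x‖ = ‖x‖ := by
    intro x; rw [hQ₁, hQ₂, hnorm]
    rfl
  have hnQ₁ : ∀ x, ‖Q₁ x‖ ≤ ‖x‖ := fun x =>
    (le_add_of_nonneg_right (norm_nonneg (Q₂ x))).trans_eq (hnQ x)
  have hnQ₂ : ∀ x, ‖Q₂ x‖ ≤ ‖x‖ := fun x =>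
    (le_add_of_nonneg_left (norm_nonneg (Q₁ x))).trans_eq (hnQ x)
  have hJ₁n : ‖J₁‖ ≤ 1 := J₁.opNorm_le_bound zero_le_one fun x => by rw [hnJ₁, one_mul]
  have hJ₂n : ‖J₂‖ ≤ 1 := J₂.opNorm_le_bound zero_le_one fun x => by rw [hnJ₂, one_mul]
  have hQ₁n : ‖Q₁‖ ≤ 1 := Q₁.opNorm_le_bound zero_le_one fun x => by
    rw [one_mul]; exact hnQ₁ x
  have hQ₂n : ‖Q₂‖ ≤ 1 := Q₂.opNorm_le_bound zero_le_one fun x => by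
    rw [one_mul]; exact hnQ₂ x
  have hsum : ∀ x, J₁ (Q₁ x) + J₂ (Q₂ x) = x := by
    intro x
    rw [hJ₁, hJ₂, hQ₁, hQ₂]
    apply (WithLp.equiv 1 (X₁ × X₂)).injective
    rw [WithLp.equiv_apply, WithLp.ofLp_add]
    simp [Prod.ext_iff]
  -- distances of the diagonal compressions
  set d₁ := Metric.infDist (Q₁ ∘L T ∘L J₁) I₁₁ with hd₁def
  set d₂ := Metric.infDist (Q₂ ∘L T ∘L J₂) I₂₂ with hd₂def
  have hIne : (I : Set (WithLp 1 (X₁ × X₂) →L[𝕜] WithLp 1 (X₁ × X₂))).Nonempty :=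
    ⟨0, I.zero_mem⟩
  have hd₁le : d₁ ≤ 1 := by
    rw [← hT, hd₁def]
    refine infDist_le_transfer _ _ _ _ hIne fun W hW => ?_
    refine ⟨Q₁ ∘L W ∘L J₁, by rw [hI₁₁]; exact ⟨W, hW, rfl⟩, ?_⟩
    rw [dist_eq_norm, dist_eq_norm]
    have heq : Q₁ ∘L T ∘L J₁ - Q₁ ∘L W ∘L J₁ = Q₁ ∘L (T - W) ∘L J₁ := by ext x; simp
    rw [heq]
    calc ‖Q₁ ∘L (T - W) ∘L J₁‖ ≤ ‖Q₁‖ * ‖(T - W) ∘L J₁‖ :=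
          ContinuousLinearMap.opNorm_comp_le _ _
      _ ≤ ‖Q₁‖ * (‖T - W‖ * ‖J₁‖) := by
          gcongr; exact ContinuousLinearMap.opNorm_comp_le _ _
      _ ≤ 1 * (‖T - W‖ * 1) := by gcongr
      _ = ‖T - W‖ := by ring
  have hd₂le : d₂ ≤ 1 := by
    rw [← hT, hd₂def]
    refine infDist_le_transfer _ _ _ _ hIne fun W hW => ?_
    refine ⟨Q₂ ∘L W ∘L J₂, by rw [hI₂₂]; exact ⟨W, hW, rfl⟩, ?_⟩
    rw [dist_eq_norm, dist_eq_norm]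
    have heq : Q₂ ∘L T ∘L J₂ - Q₂ ∘L W ∘L J₂ = Q₂ ∘L (T - W) ∘L J₂ := by ext x; simp
    rw [heq]
    calc ‖Q₂ ∘L (T - W) ∘L J₂‖ ≤ ‖Q₂‖ * ‖(T - W) ∘L J₂‖ :=
          ContinuousLinearMap.opNorm_comp_le _ _
      _ ≤ ‖Q₂‖ * (‖T - W‖ * ‖J₂‖) := by
          gcongr; exact ContinuousLinearMap.opNorm_comp_le _ _
      _ ≤ 1 * (‖T - W‖ * 1) := by gcongr
      _ = ‖T - W‖ := by ring
  -- cross terms of T are realized by members of I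
  obtain ⟨V₁, hV₁mem, hV₁eq⟩ : ∃ W ∈ I, Q₁ ∘L T ∘L J₂ = Q₁ ∘L W ∘L J₂ := by
    have : (Q₁ ∘L T ∘L J₂) ∈ {S : X₂ →L[𝕜] X₁ | ∃ W ∈ I, S = Q₁ ∘L W ∘L J₂} := by
      rw [hI₁₂]; trivial
    exact this
  obtain ⟨V₂, hV₂mem, hV₂eq⟩ : ∃ W ∈ I, Q₂ ∘L T ∘L J₁ = Q₂ ∘L W ∘L J₁ := by
    have : (Q₂ ∘L T ∘L J₁) ∈ {S : X₁ →L[𝕜] X₂ | ∃ W ∈ I, S = Q₂ ∘L W ∘L J₁} := by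
      rw [hI₂₁]; trivial
    exact this
  -- block norm estimate for diagonal operators
  have hblock : ∀ (A : X₁ →L[𝕜] X₁) (B : X₂ →L[𝕜] X₂),
      ‖J₁ ∘L A ∘L Q₁ + J₂ ∘L B ∘L Q₂‖ ≤ max ‖A‖ ‖B‖ := by
    intro A B
    refine ContinuousLinearMap.opNorm_le_bound _
      (le_trans (norm_nonneg A) (le_max_left _ _)) fun x => ?_
    calc ‖(J₁ ∘L A ∘L Q₁ + J₂ ∘L B ∘L Q₂) x‖
        = ‖J₁ (A (Q₁ x)) + J₂ (B (Q₂ x))‖ := rfl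
      _ ≤ ‖J₁ (A (Q₁ x))‖ + ‖J₂ (B (Q₂ x))‖ := norm_add_le _ _
      _ = ‖A (Q₁ x)‖ + ‖B (Q₂ x)‖ := by rw [hnJ₁, hnJ₂]
      _ ≤ ‖A‖ * ‖Q₁ x‖ + ‖B‖ * ‖Q₂ x‖ := add_le_add (A.le_opNorm _) (B.le_opNorm _)
      _ ≤ max ‖A‖ ‖B‖ * ‖Q₁ x‖ + max ‖A‖ ‖B‖ * ‖Q₂ x‖ :=
          add_le_add (mul_le_mul_of_nonneg_right (le_max_left _ _) (norm_nonneg _))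
            (mul_le_mul_of_nonneg_right (le_max_right _ _) (norm_nonneg _))
      _ = max ‖A‖ ‖B‖ * (‖Q₁ x‖ + ‖Q₂ x‖) := by ring
      _ = max ‖A‖ ‖B‖ * ‖x‖ := by rw [hnQ]
  -- nonemptiness of the diagonal quadrants
  have hne₁₁ : I₁₁.Nonempty := ⟨0, by rw [hI₁₁]; exact ⟨0, I.zero_mem, by ext x; simp⟩⟩
  have hne₂₂ : I₂₂.Nonempty := ⟨0, by rw [hI₂₂]; exact ⟨0, I.zero_mem, by ext x; simp⟩⟩
  -- the key estimate: dist(T, I) ≤ max d₁ d₂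
  have hmax : Metric.infDist T (I : Set (WithLp 1 (X₁ × X₂) →L[𝕜] WithLp 1 (X₁ × X₂)))
      ≤ max d₁ d₂ := by
    refine le_of_forall_pos_le_add fun ε hε => ?_
    obtain ⟨A₁, hA₁, hdA₁⟩ := (Metric.infDist_lt_iff hne₁₁).1
      (lt_add_of_pos_right d₁ hε : d₁ < d₁ + ε)
    obtain ⟨A₂, hA₂, hdA₂⟩ := (Metric.infDist_lt_iff hne₂₂).1
      (lt_add_of_pos_right d₂ hε : d₂ < d₂ + ε)
    rw [hI₁₁] at hA₁
    obtain ⟨W₁, hW₁mem, rfl⟩ := hA₁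
    rw [hI₂₂] at hA₂
    obtain ⟨W₂, hW₂mem, rfl⟩ := hA₂
    set W : WithLp 1 (X₁ × X₂) →L[𝕜] WithLp 1 (X₁ × X₂) :=
      ((J₁ ∘L Q₁) ∘L V₁ ∘L (J₂ ∘L Q₂) + (J₂ ∘L Q₂) ∘L V₂ ∘L (J₁ ∘L Q₁)) +
      ((J₁ ∘L Q₁) ∘L W₁ ∘L (J₁ ∘L Q₁) + (J₂ ∘L Q₂) ∘L W₂ ∘L (J₂ ∘L Q₂)) with hWdef
    have hWmem : W ∈ I :=
      add_mem (add_mem (hI_ideal V₁ hV₁mem _ _) (hI_ideal V₂ hV₂mem _ _))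
        (add_mem (hI_ideal W₁ hW₁mem _ _) (hI_ideal W₂ hW₂mem _ _))
    have hTW : T - W = J₁ ∘L (Q₁ ∘L T ∘L J₁ - Q₁ ∘L W₁ ∘L J₁) ∘L Q₁
        + J₂ ∘L (Q₂ ∘L T ∘L J₂ - Q₂ ∘L W₂ ∘L J₂) ∘L Q₂ := by
      ext x
      have e1 : Q₁ (V₁ (J₂ (Q₂ x))) = Q₁ (T (J₂ (Q₂ x))) := by
        have := ContinuousLinearMap.ext_iff.1 hV₁eq (Q₂ x)
        simpa using this.symm
      have e2 : Q₂ (V₂ (J₁ (Q₁ x))) = Q₂ (T (J₁ (Q₁ x))) := by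
        have := ContinuousLinearMap.ext_iff.1 hV₂eq (Q₁ x)
        simpa using this.symm
      have e3 : T (J₁ (Q₁ x)) + T (J₂ (Q₂ x)) = T x := by rw [← map_add, hsum]
      have e4 : J₁ (Q₁ (T (J₁ (Q₁ x)))) + J₂ (Q₂ (T (J₁ (Q₁ x)))) = T (J₁ (Q₁ x)) :=
        hsum _
      have e5 : J₁ (Q₁ (T (J₂ (Q₂ x)))) + J₂ (Q₂ (T (J₂ (Q₂ x)))) = T (J₂ (Q₂ x)) :=
        hsum _
      simp only [hWdef, ContinuousLinearMap.sub_apply, ContinuousLinearMap.add_apply,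
        ContinuousLinearMap.comp_apply, map_sub, e1, e2]
      have e6 : T x = J₁ (Q₁ (T (J₁ (Q₁ x)))) + J₂ (Q₂ (T (J₁ (Q₁ x)))) +
          (J₁ (Q₁ (T (J₂ (Q₂ x)))) + J₂ (Q₂ (T (J₂ (Q₂ x))))) := by
        rw [e4, e5, e3]
      rw [e6]
      abel
    have hnormTW : ‖T - W‖ ≤ max d₁ d₂ + ε := by
      rw [hTW]
      refine le_trans (hblock _ _) ?_
      have b1 : ‖Q₁ ∘L T ∘L J₁ - Q₁ ∘L W₁ ∘L J₁‖ ≤ d₁ + ε := by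
        rw [← dist_eq_norm]; exact hdA₁.le
      have b2 : ‖Q₂ ∘L T ∘L J₂ - Q₂ ∘L W₂ ∘L J₂‖ ≤ d₂ + ε := by
        rw [← dist_eq_norm]; exact hdA₂.le
      calc max ‖Q₁ ∘L T ∘L J₁ - Q₁ ∘L W₁ ∘L J₁‖ ‖Q₂ ∘L T ∘L J₂ - Q₂ ∘L W₂ ∘L J₂‖
          ≤ max (d₁ + ε) (d₂ + ε) := max_le_max b1 b2
        _ = max d₁ d₂ + ε := max_add_add_right d₁ d₂ ε
    calc Metric.infDist T (I : Set (WithLp 1 (X₁ × X₂) →L[𝕜] WithLp 1 (X₁ × X₂)))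
        ≤ dist T W := Metric.infDist_le_dist_of_mem hWmem
      _ = ‖T - W‖ := dist_eq_norm _ _
      _ ≤ max d₁ d₂ + ε := hnormTW
  have hmax1 : max d₁ d₂ = 1 := le_antisymm (max_le hd₁le hd₂le) (hT ▸ hmax)
  rcases max_choice d₁ d₂ with hcase | hcase
  · -- d₁ = 1 : work in the first coordinate
    have hd₁ : d₁ = 1 := hcase ▸ hmax1
    exact auxFactor J₁ Q₁ hQJ₁ hJ₁n hQ₁n I hI_ideal I₁₁ hI₁₁ (max C₁ C₂)
      (fun T' hT' => by
        obtain ⟨R, S, h1, h2, h3⟩ := h₁ T' hT'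
        exact ⟨R, S, h1.trans (le_max_left _ _), h2, h3⟩) T hd₁
  · have hd₂ : d₂ = 1 := hcase ▸ hmax1
    exact auxFactor J₂ Q₂ hQJ₂ hJ₂n hQ₂n I hI_ideal I₂₂ hI₂₂ (max C₁ C₂)
      (fun T' hT' => by
        obtain ⟨R, S, h1, h2, h3⟩ := h₂ T' hT'
        exact ⟨R, S, h1.trans (le_max_right _ _), h2, h3⟩) T hd₂
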